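/- Let G be a connected simple graph, let k ≥ 2, and let T_1, …, T_k be completely independent spanning trees of G. For each i, let u_i be an internal vertex of T_i. In the graph G □ K_2 (the Cartesian product of G with an edge, consisting of two copies G^0 and G^1 of G joined by a perfect matching between corresponding vertices), let T̄_i be the spanning subgraph consisting of the copy of T_i inside G^0, the copy of T_i inside G^1, and the matching edge joining the two copies of u_i. Then T̄_1, …, T̄_k are completely independent spanning trees of G □ K_2. -/

import Mathlib

open SimpleGraph

/-- `T` is a spanning tree of `G`: a subgraph of `G` (on the same vertex set) that is a tree. -/
def IsSpanningTreeOf {V : Type*} (G T : SimpleGraph V) : Prop :=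
  T ≤ G ∧ T.IsTree

/-- A family of spanning trees of `G` are *completely independent* if for every pair of
distinct vertices `x ≠ y` and distinct indices `i ≠ j`, the (unique) paths from `x` to `y`
in `T i` and `T j` share no edges, and share no vertices except `x` and `y`. -/
def AreCISTs {V : Type*} {k : ℕ} (G : SimpleGraph V) (T : Fin k → SimpleGraph V) : Prop :=
  (∀ i, IsSpanningTreeOf G (T i)) ∧
  ∀ x y : V, x ≠ y → ∀ i j : Fin k, i ≠ j →
    ∀ p : (T i).Walk x y, ∀ q : (T j).Walk x y, p.IsPath → q.IsPath →
      (∀ e ∈ p.edges, e ∉ q.edges) ∧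
      (∀ v ∈ p.support, v ∈ q.support → v = x ∨ v = y)

/-- The `n`-dimensional hypercube: vertices are functions `Fin n → ZMod 2`, adjacent iff
they differ in exactly one coordinate. -/
def hypercube (n : ℕ) : SimpleGraph (Fin n → ZMod 2) where
  Adj x y := hammingDist x y = 1
  symm := ⟨fun x y h => by show hammingDist y x = 1; rw [hammingDist_comm]; exact h⟩
  loopless := ⟨fun x h => by simp [hammingDist_self] at h⟩

/-- `G` is `k`-connected: it has more than `k` vertices and remains connected after
removing any set of fewer than `k` vertices. -/
def KConnected {V : Type*} (G : SimpleGraph V) (k : ℕ) : Prop :=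
  k < Nat.card V ∧
  ∀ s : Finset V, s.card < k → ((G.induce ((↑s : Set V)ᶜ))).Connected

/-- `G` is `k`-regular: every vertex has exactly `k` neighbours. -/
def IsKRegular {V : Type*} (G : SimpleGraph V) (k : ℕ) : Prop :=
  ∀ v : V, (G.neighborSet v).ncard = k

/-- Given a graph `T` on `V` and a distinguished vertex `u`, the spanning subgraph of
`T □ K₂` (on vertex set `V × Fin 2`) consisting of the two copies of `T` together with the
single matching edge joining the two copies of `u`. -/
def liftTree {V : Type*} (T : SimpleGraph V) (u : V) : SimpleGraph (V × Fin 2) where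
  Adj x y := (x.2 = y.2 ∧ T.Adj x.1 y.1) ∨ (x.1 = u ∧ y.1 = u ∧ x.2 ≠ y.2)
  symm := by
    constructor
    rintro ⟨a, b⟩ ⟨c, d⟩ (⟨h1, h2⟩ | ⟨h1, h2, h3⟩)
    · exact Or.inl ⟨h1.symm, h2.symm⟩
    · exact Or.inr ⟨h2, h1, h3.symm⟩
  loopless := by
    constructor
    rintro ⟨a, b⟩ (⟨_, h⟩ | ⟨_, _, h⟩)
    · exact T.loopless.irrefl a h
    · exact h rfl

namespace CISTHelper

variable {V : Type*}

/-- A vertex with two distinct neighbours. -/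
def Deg2 (T : SimpleGraph V) (v : V) : Prop := ∃ a b, a ≠ b ∧ T.Adj v a ∧ T.Adj v b

lemma deg2_of_ncard {T : SimpleGraph V} {v : V} (h : 2 ≤ (T.neighborSet v).ncard) :
    Deg2 T v := by
  have hfin : (T.neighborSet v).Finite := by
    by_contra hinf
    rw [Set.Infinite.ncard hinf] at h
    omega
  obtain ⟨a, b, ha, hb, hab⟩ := (Set.one_lt_ncard_iff hfin).mp (by omega)
  exact ⟨a, b, hab, ha, hb⟩

lemma deg2_of_mem_path {T : SimpleGraph V} {x y v : V} (p : T.Walk x y) (hp : p.IsPath)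
    (hv : v ∈ p.support) (hx : v ≠ x) (hy : v ≠ y) : Deg2 T v := by
  induction p with
  | nil => simp at hv; exact absurd hv hx
  | @cons a w b h p' ih =>
    rw [Walk.cons_isPath_iff] at hp
    rw [Walk.support_cons, List.mem_cons] at hv
    rcases hv with rfl | hv
    · exact absurd rfl hx
    · by_cases hvw : v = w
      · subst hvw
        cases p' with
        | nil => exact absurd rfl hy
        | @cons _ z _ h' p'' =>
          refine ⟨a, z, ?_, h.symm, h'⟩
          rintro rfl
          exact hp.2 (by simp)
      · exact ih hp.1 hv hvw hy

/-- Transitivity of "there is a path avoiding `v`". -/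
lemma avoid_trans {T : SimpleGraph V} {v x y z : V}
    (h1 : ∃ q : T.Walk x z, q.IsPath ∧ v ∉ q.support)
    (h2 : ∃ r : T.Walk z y, r.IsPath ∧ v ∉ r.support) :
    ∃ p : T.Walk x y, p.IsPath ∧ v ∉ p.support := by
  classical
  obtain ⟨q, _, hq⟩ := h1
  obtain ⟨r, _, hr⟩ := h2
  refine ⟨(q.append r).bypass, Walk.bypass_isPath _, fun hv => ?_⟩
  have := (q.append r).support_bypass_subset hv
  rw [Walk.mem_support_append_iff] at this
  tauto

lemma avoid_symm {T : SimpleGraph V} {v x y : V}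
    (h : ∃ q : T.Walk x y, q.IsPath ∧ v ∉ q.support) :
    ∃ q : T.Walk y x, q.IsPath ∧ v ∉ q.support := by
  obtain ⟨q, hq, hv⟩ := h
  exact ⟨q.reverse, hq.reverse, by simpa [Walk.support_reverse] using hv⟩

/-- In a tree, every path between two distinct neighbours of `v` passes through `v`. -/
lemma not_avoid_nbrs {T : SimpleGraph V} (hT : T.IsTree) {v a b : V}
    (ha : T.Adj v a) (hb : T.Adj v b) (hab : a ≠ b) :
    ¬ ∃ p : T.Walk a b, p.IsPath ∧ v ∉ p.support := by
  rintro ⟨p, hp, hv⟩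
  have hcanon : (Walk.cons ha.symm (Walk.cons hb Walk.nil) : T.Walk a b).IsPath := by
    rw [Walk.cons_isPath_iff, Walk.cons_isPath_iff]
    refine ⟨⟨Walk.IsPath.nil, ?_⟩, ?_⟩
    · simp [hb.ne]
    · simp [ha.ne', hab]
  obtain ⟨P, _, huniq⟩ := (isTree_iff_existsUnique_path.mp hT).2 a b
  have h1 := huniq _ hp
  have h2 := huniq _ hcanon
  rw [h1, ← h2] at hv
  simp at hv

lemma edge_disjoint {k : ℕ} {G : SimpleGraph V} {T : Fin k → SimpleGraph V}
    (hcist : AreCISTs G T) {i j : Fin k} (hij : i ≠ j) {a b : V}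
    (hi : (T i).Adj a b) (hj : (T j).Adj a b) : False := by
  have hp : (Walk.cons hi Walk.nil : (T i).Walk a b).IsPath := by
    simp [Walk.cons_isPath_iff, hi.ne]
  have hq : (Walk.cons hj Walk.nil : (T j).Walk a b).IsPath := by
    simp [Walk.cons_isPath_iff, hj.ne]
  exact (hcist.2 a b hi.ne i j hij _ _ hp hq).1 s(a, b) (by simp) (by simp)

lemma internal_disjoint {k : ℕ} {G : SimpleGraph V} {T : Fin k → SimpleGraph V}
    (hcist : AreCISTs G T) {i j : Fin k} (hij : i ≠ j) {v : V}
    (hi : Deg2 (T i) v) (hj : Deg2 (T j) v) : False := by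
  classical
  obtain ⟨a, b, hab, hva, hvb⟩ := hi
  obtain ⟨c, d, hcd, hvc, hvd⟩ := hj
  set Ai : V → V → Prop := fun x y => ∃ p : (T i).Walk x y, p.IsPath ∧ v ∉ p.support with hAidef
  set Aj : V → V → Prop := fun x y => ∃ p : (T j).Walk x y, p.IsPath ∧ v ∉ p.support with hAjdef
  have itransi : ∀ {x y z : V}, Ai x z → Ai z y → Ai x y := fun h1 h2 => avoid_trans h1 h2
  have itransj : ∀ {x y z : V}, Aj x z → Aj z y → Aj x y := fun h1 h2 => avoid_trans h1 h2
  have isymmi : ∀ {x y : V}, Ai x y → Ai y x := fun h => avoid_symm h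
  have isymmj : ∀ {x y : V}, Aj x y → Aj y x := fun h => avoid_symm h
  have nAi : ¬ Ai a b := not_avoid_nbrs (hcist.1 i).2 hva hvb hab
  have nAj : ¬ Aj c d := not_avoid_nbrs (hcist.1 j).2 hvc hvd hcd
  have key : ∃ z w, ¬ Ai z w ∧ ¬ Aj z w ∧ v ≠ z ∧ v ≠ w := by
    by_cases hAjab : Aj a b
    · by_cases hAicd : Ai c d
      · have hw : ∃ w, (w = c ∨ w = d) ∧ ¬ Aj a w ∧ ¬ Aj b w := by
          by_cases h1 : Aj a c
          · have had : ¬ Aj a d := fun h => nAj (itransj (isymmj h1) h)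
            exact ⟨d, Or.inr rfl, had, fun h => had (itransj hAjab h)⟩
          · exact ⟨c, Or.inl rfl, h1, fun h => h1 (itransj hAjab h)⟩
        have hz : ∃ z, (z = a ∨ z = b) ∧ ¬ Ai c z ∧ ¬ Ai d z := by
          by_cases h1 : Ai c a
          · have hcb : ¬ Ai c b := fun h => nAi (itransi (isymmi h1) h)
            exact ⟨b, Or.inr rfl, hcb, fun h => hcb (itransi hAicd h)⟩
          · exact ⟨a, Or.inl rfl, h1, fun h => h1 (itransi hAicd h)⟩
        obtain ⟨w, hwcd, hwa, hwb⟩ := hw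
        obtain ⟨z, hzab, hzc, hzd⟩ := hz
        refine ⟨z, w, ?_, ?_, ?_, ?_⟩
        · rcases hwcd with rfl | rfl
          · exact fun h => hzc (isymmi h)
          · exact fun h => hzd (isymmi h)
        · rcases hzab with rfl | rfl
          · exact hwa
          · exact hwb
        · rcases hzab with rfl | rfl
          · exact hva.ne
          · exact hvb.ne
        · rcases hwcd with rfl | rfl
          · exact hvc.ne
          · exact hvd.ne
      · exact ⟨c, d, hAicd, nAj, hvc.ne, hvd.ne⟩
    · exact ⟨a, b, nAi, hAjab, hva.ne, hvb.ne⟩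
  obtain ⟨z, w, hZi, hZj, hvz, hvw⟩ := key
  have hzw : z ≠ w := by
    rintro rfl
    exact hZi ⟨Walk.nil, Walk.IsPath.nil, by simpa using hvz⟩
  obtain ⟨pw⟩ := (hcist.1 i).2.isConnected z w
  obtain ⟨qw⟩ := (hcist.1 j).2.isConnected z w
  have hvp : v ∈ pw.toPath.1.support := by
    by_contra h
    exact hZi ⟨pw.toPath.1, pw.toPath.2, h⟩
  have hvq : v ∈ qw.toPath.1.support := by
    by_contra h
    exact hZj ⟨qw.toPath.1, qw.toPath.2, h⟩
  rcases (hcist.2 z w hzw i j hij _ _ pw.toPath.2 qw.toPath.2).2 v hvp hvq with rfl | rfl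
  · exact hvz rfl
  · exact hvw rfl

/-! ### The lift construction -/

section Lift

variable (T : SimpleGraph V) (u : V)

/-- The homomorphism embedding `T` in side `s` of `liftTree T u`. -/
def sideHom (s : Fin 2) : T →g liftTree T u where
  toFun v := (v, s)
  map_rel' h := Or.inl ⟨rfl, h⟩

variable {T u}

@[simp] lemma sideHom_apply {s : Fin 2} (v : V) : sideHom T u s v = (v, s) := rfl

lemma sideHom_inj {s : Fin 2} : Function.Injective (sideHom T u s) :=
  fun a b h => congrArg Prod.fst h

@[simp] lemma mem_map_side {l : List V} {w : V} {r s : Fin 2} :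
    ((w, r) ∈ l.map (sideHom T u s)) ↔ (w ∈ l ∧ r = s) := by
  simp only [List.mem_map, sideHom_apply, Prod.mk.injEq]
  constructor
  · rintro ⟨a, ha, rfl, rfl⟩; exact ⟨ha, rfl⟩
  · rintro ⟨ha, rfl⟩; exact ⟨w, ha, rfl, rfl⟩

/-- The canonical walk in `liftTree T u` between the two sides, crossing at `u`. -/
def crossWalk {x y : V} {s t : Fin 2} (h : s ≠ t) (p : T.Walk x u) (q : T.Walk u y) :
    (liftTree T u).Walk (x, s) (y, t) :=
  (p.map (sideHom T u s)).append
    (Walk.cons (show (liftTree T u).Adj (u, s) (u, t) from Or.inr ⟨rfl, rfl, h⟩)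
      (q.map (sideHom T u t)))

lemma crossWalk_support {x y : V} {s t : Fin 2} (h : s ≠ t) (p : T.Walk x u)
    (q : T.Walk u y) : (crossWalk h p q).support =
      p.support.map (sideHom T u s) ++ q.support.map (sideHom T u t) := by
  erw [crossWalk, Walk.support_append, Walk.support_cons, List.tail_cons,
    Walk.support_map, Walk.support_map]

lemma crossWalk_edges {x y : V} {s t : Fin 2} (h : s ≠ t) (p : T.Walk x u)
    (q : T.Walk u y) : (crossWalk h p q).edges =
      p.edges.map (Sym2.map (sideHom T u s)) ++
        (s((u, s), (u, t)) :: q.edges.map (Sym2.map (sideHom T u t))) := by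
  erw [crossWalk, Walk.edges_append, Walk.edges_cons, Walk.edges_map, Walk.edges_map]
  rfl

lemma crossWalk_isPath {x y : V} {s t : Fin 2} (h : s ≠ t) {p : T.Walk x u}
    {q : T.Walk u y} (hp : p.IsPath) (hq : q.IsPath) : (crossWalk h p q).IsPath := by
  rw [Walk.isPath_def, crossWalk_support]
  refine List.Nodup.append ?_ ?_ ?_
  · exact hp.support_nodup.map sideHom_inj
  · exact hq.support_nodup.map sideHom_inj
  · rintro ⟨w, r⟩ h1 h2
    rw [mem_map_side] at h1 h2
    exact h (h1.2.symm.trans h2.2)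

/-- Every path in `liftTree T u` either stays in one side or is a cross walk. -/
lemma lift_path_decomp {a b : V × Fin 2} (P : (liftTree T u).Walk a b) (hP : P.IsPath) :
    (∃ (h : a.2 = b.2) (p : T.Walk a.1 b.1), p.IsPath ∧
        P = (p.map (sideHom T u a.2)).copy rfl ((congrArg (Prod.mk b.1) h).trans rfl)) ∨
    (∃ (h : a.2 ≠ b.2) (p : T.Walk a.1 u) (q : T.Walk u b.1), p.IsPath ∧ q.IsPath ∧
        P = crossWalk h p q) := by
  induction P with
  | nil => exact Or.inl ⟨rfl, Walk.nil, Walk.IsPath.nil, rfl⟩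
  | @cons a c b h P' ih =>
    obtain ⟨xa, sa⟩ := a
    obtain ⟨xc, sc⟩ := c
    obtain ⟨xb, sb⟩ := b
    rw [Walk.cons_isPath_iff] at hP
    obtain ⟨hP', hnotin⟩ := hP
    rcases h with ⟨hs, hadj⟩ | ⟨h1, h2, h3⟩
    · simp only at hs hadj
      subst hs
      rcases ih hP' with ⟨h2, p', hp', hEq⟩ | ⟨h2, p', q', hp', hq', hEq⟩
      · simp only at h2
        subst h2
        refine Or.inl ⟨rfl, Walk.cons hadj p', ?_, ?_⟩
        · rw [Walk.cons_isPath_iff]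
          refine ⟨hp', fun hmem => hnotin ?_⟩
          rw [hEq]
          erw [Walk.support_copy, Walk.support_map]
          exact mem_map_side.mpr ⟨hmem, rfl⟩
        · rw [hEq]
          rfl
      · simp only at h2
        refine Or.inr ⟨h2, Walk.cons hadj p', q', ?_, hq', ?_⟩
        · rw [Walk.cons_isPath_iff]
          refine ⟨hp', fun hmem => hnotin ?_⟩
          rw [hEq, crossWalk_support]
          exact List.mem_append_left _ (mem_map_side.mpr ⟨hmem, rfl⟩)
        · rw [hEq]
          rfl
    · simp only at h1 h2 h3
      subst h1
      subst h2
      rcases ih hP' with ⟨h2, p', hp', hEq⟩ | ⟨h2, p', q', hp', hq', hEq⟩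
      · simp only at h2
        subst h2
        refine Or.inr ⟨h3, Walk.nil, p', Walk.IsPath.nil, hp', ?_⟩
        rw [hEq]
        rfl
      · simp only at h2
        exfalso
        have hsab : sa = sb := by
          have : ∀ x y z : Fin 2, x ≠ y → y ≠ z → x = z := by decide
          exact this _ _ _ h3 h2
        apply hnotin
        rw [hEq, crossWalk_support, hsab]
        exact List.mem_append_right _ (mem_map_side.mpr ⟨q'.start_mem_support, rfl⟩)

lemma liftTree_isTree (hT : T.IsTree) : (liftTree T u).IsTree := by
  rw [isTree_iff_existsUnique_path]
  obtain ⟨hne, hup⟩ := isTree_iff_existsUnique_path.mp hT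
  refine ⟨⟨(Classical.choice hne, 0)⟩, ?_⟩
  rintro ⟨x, s⟩ ⟨y, t⟩
  by_cases hst : s = t
  · subst hst
    obtain ⟨p₀, hp₀, hpu⟩ := hup x y
    refine ⟨p₀.map (sideHom T u s), Walk.map_isPath_of_injective sideHom_inj hp₀, ?_⟩
    intro P hP
    rcases lift_path_decomp P hP with ⟨h, p, hp, rfl⟩ | ⟨h, _, _, _, _, _⟩
    · rw [hpu p hp]
      rfl
    · exact absurd rfl h
  · obtain ⟨p₀, hp₀, hpu⟩ := hup x u
    obtain ⟨q₀, hq₀, hqu⟩ := hup u y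
    refine ⟨crossWalk hst p₀ q₀, crossWalk_isPath hst hp₀ hq₀, ?_⟩
    intro P hP
    rcases lift_path_decomp P hP with ⟨h, _, _, _⟩ | ⟨h, p, q, hp, hq, rfl⟩
    · exact absurd h hst
    · rw [hpu p hp, hqu q hq]

lemma sym2_side_inj {s : Fin 2} {e₁ e₂ : Sym2 V} {T' : SimpleGraph V} {u' : V}
    (h : Sym2.map (sideHom T u s) e₁ = Sym2.map (sideHom T' u' s) e₂) : e₁ = e₂ := by
  induction e₁ using Sym2.ind with | _ a b =>
  induction e₂ using Sym2.ind with | _ c d =>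
  rw [Sym2.map_pair_eq, Sym2.map_pair_eq, Sym2.eq_iff] at h
  rcases h with ⟨h1, h2⟩ | ⟨h1, h2⟩
  · rw [show a = c from congrArg Prod.fst h1, show b = d from congrArg Prod.fst h2]
  · rw [show a = d from congrArg Prod.fst h1, show b = c from congrArg Prod.fst h2]
    exact Sym2.eq_swap

lemma sym2_side_ne {s t : Fin 2} (hst : s ≠ t) (e₁ e₂ : Sym2 V) {T' : SimpleGraph V} {u' : V} :
    Sym2.map (sideHom T u s) e₁ ≠ Sym2.map (sideHom T' u' t) e₂ := by
  induction e₁ using Sym2.ind with | _ a b =>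
  induction e₂ using Sym2.ind with | _ c d =>
  intro h
  rw [Sym2.map_pair_eq, Sym2.map_pair_eq, Sym2.eq_iff] at h
  rcases h with ⟨h1, -⟩ | ⟨h1, -⟩ <;> exact hst (congrArg Prod.snd h1)

lemma sym2_side_ne_cross {s r r' : Fin 2} (hrr' : r ≠ r') (e : Sym2 V) (w : V) :
    Sym2.map (sideHom T u s) e ≠ s((w, r), (w, r')) := by
  induction e using Sym2.ind with | _ a b =>
  intro h
  rw [Sym2.map_pair_eq, Sym2.eq_iff] at h
  rcases h with ⟨h1, h2⟩ | ⟨h1, h2⟩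
  · exact hrr' ((show s = r from congrArg Prod.snd h1).symm.trans
      (show s = r' from congrArg Prod.snd h2))
  · exact hrr' ((show s = r from congrArg Prod.snd h2).symm.trans
      (show s = r' from congrArg Prod.snd h1))

end Lift

end CISTHelper

open CISTHelper

/-- (Corollary for constructing CISTs by doubling.) Let `T 1, …, T k` (`k ≥ 2`) be
completely independent spanning trees of a connected graph `G` and, for each `i`, let
`u i` be an internal vertex of `T i`. Then the trees obtained by joining the two copies
of `T i` in `G □ K₂` by the matching edge at `u i` are completely independent spanning
trees of `G □ K₂`. -/
theorem lifted_trees_are_cists {V : Type*} {k : ℕ} (hk : 2 ≤ k)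
    (G : SimpleGraph V) (hG : G.Connected)
    (T : Fin k → SimpleGraph V) (hcist : AreCISTs G T)
    (u : Fin k → V) (hu : ∀ i, 2 ≤ ((T i).neighborSet (u i)).ncard) :
    AreCISTs (G □ (⊤ : SimpleGraph (Fin 2))) (fun i => liftTree (T i) (u i)) := by
  classical
  have hud : ∀ i, Deg2 (T i) (u i) := fun i => deg2_of_ncard (hu i)
  constructor
  · intro i
    constructor
    · rintro ⟨xa, sa⟩ ⟨xb, sb⟩ (⟨hs, hadj⟩ | ⟨h1, h2, h3⟩)
      · exact SimpleGraph.boxProd_adj.mpr (Or.inl ⟨(hcist.1 i).1 hadj, hs⟩)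
      · exact SimpleGraph.boxProd_adj.mpr (Or.inr ⟨h3, h1.trans h2.symm⟩)
    · exact CISTHelper.liftTree_isTree (hcist.1 i).2
  · rintro ⟨x, s⟩ ⟨y, t⟩ hXY i j hij P Q hP hQ
    have hDij : ∀ v, Deg2 (T i) v → Deg2 (T j) v → False :=
      fun v hvi hvj => internal_disjoint hcist hij hvi hvj
    have hEij : ∀ e : Sym2 V, e ∈ (T i).edgeSet → e ∈ (T j).edgeSet → False := by
      intro e he1 he2
      induction e using Sym2.ind with | _ a b =>
      exact edge_disjoint hcist hij he1 he2
    have huij : u i ≠ u j := fun h => hDij (u i) (hud i) (h ▸ hud j)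
    rcases lift_path_decomp P hP with ⟨hst, p, hp, rfl⟩ | ⟨hst, p₁, q₁, hp₁, hq₁, rfl⟩
    · -- same side
      have hst' : s = t := hst
      subst hst'
      have hxy : x ≠ y := fun h => hXY (by rw [h])
      rcases lift_path_decomp Q hQ with ⟨h2, p', hp', rfl⟩ | ⟨h2, _, _, _, _, -⟩
      swap
      · exact absurd rfl h2
      constructor
      · intro e heP heQ
        erw [Walk.edges_copy, Walk.edges_map] at heP heQ
        obtain ⟨e₁, he₁, rfl⟩ := List.mem_map.mp heP
        obtain ⟨e₂, he₂, heq⟩ := List.mem_map.mp heQ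
        have he21 : e₂ = e₁ := sym2_side_inj heq
        subst he21
        exact (hcist.2 x y hxy i j hij p p' hp hp').1 e₂ he₁ he₂
      · rintro ⟨w, r⟩ hvP hvQ
        erw [Walk.support_copy, Walk.support_map] at hvP hvQ
        obtain ⟨hw1, rfl⟩ := mem_map_side.mp hvP
        obtain ⟨hw2, -⟩ := mem_map_side.mp hvQ
        rcases (hcist.2 x y hxy i j hij p p' hp hp').2 w hw1 hw2 with rfl | rfl
        · exact Or.inl rfl
        · exact Or.inr rfl
    · -- crossing paths
      have hst' : s ≠ t := hst
      rcases lift_path_decomp Q hQ with ⟨h2, _, _, -⟩ | ⟨h2, p₂, q₂, hp₂, hq₂, rfl⟩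
      · exact absurd h2 hst'
      constructor
      · intro e heP heQ
        rw [crossWalk_edges, List.mem_append, List.mem_cons] at heP heQ
        rcases heP with h1 | h1 | h1
        · obtain ⟨e₁, he₁, rfl⟩ := List.mem_map.mp h1
          rcases heQ with hq' | hq' | hq'
          · obtain ⟨e₂, he₂, heq⟩ := List.mem_map.mp hq'
            have he21 : e₂ = e₁ := sym2_side_inj heq
            subst he21
            exact hEij e₂ (Walk.edges_subset_edgeSet _ he₁) (Walk.edges_subset_edgeSet _ he₂)
          · exact sym2_side_ne_cross hst' e₁ (u j) hq'
          · obtain ⟨e₂, he₂, heq⟩ := List.mem_map.mp hq'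
            exact sym2_side_ne hst' e₁ e₂ heq.symm
        · subst h1
          rcases heQ with hq' | hq' | hq'
          · obtain ⟨e₂, he₂, heq⟩ := List.mem_map.mp hq'
            exact sym2_side_ne_cross hst' e₂ (u i) heq
          · rw [Sym2.eq_iff] at hq'
            rcases hq' with ⟨ha, -⟩ | ⟨ha, -⟩
            · exact huij (congrArg Prod.fst ha)
            · exact hst' (congrArg Prod.snd ha)
          · obtain ⟨e₂, he₂, heq⟩ := List.mem_map.mp hq'
            exact sym2_side_ne_cross hst' e₂ (u i) heq
        · obtain ⟨e₁, he₁, rfl⟩ := List.mem_map.mp h1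
          rcases heQ with hq' | hq' | hq'
          · obtain ⟨e₂, he₂, heq⟩ := List.mem_map.mp hq'
            exact sym2_side_ne (Ne.symm hst') e₁ e₂ heq.symm
          · exact sym2_side_ne_cross hst' e₁ (u j) hq'
          · obtain ⟨e₂, he₂, heq⟩ := List.mem_map.mp hq'
            have he21 : e₂ = e₁ := sym2_side_inj heq
            subst he21
            exact hEij e₂ (Walk.edges_subset_edgeSet _ he₁) (Walk.edges_subset_edgeSet _ he₂)
      · rintro ⟨w, r⟩ hvP hvQ
        rw [crossWalk_support, List.mem_append] at hvP hvQ
        rcases hvP with h1 | h1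
        · obtain ⟨hw1, rfl⟩ := mem_map_side.mp h1
          rcases hvQ with h2 | h2
          swap
          · obtain ⟨-, h⟩ := mem_map_side.mp h2
            exact absurd h hst'
          obtain ⟨hw2, -⟩ := mem_map_side.mp h2
          have hwx : w = x := by
            by_contra hwx
            by_cases hwi : w = u i
            · subst hwi
              exact hDij (u i) (hud i) (deg2_of_mem_path p₂ hp₂ hw2 hwx huij)
            · have hdi : Deg2 (T i) w := deg2_of_mem_path p₁ hp₁ hw1 hwx hwi
              by_cases hwj : w = u j
              · subst hwj
                exact hDij (u j) hdi (hud j)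
              · exact hDij w hdi (deg2_of_mem_path p₂ hp₂ hw2 hwx hwj)
          subst hwx
          exact Or.inl rfl
        · obtain ⟨hw1, rfl⟩ := mem_map_side.mp h1
          rcases hvQ with h2 | h2
          · obtain ⟨-, h⟩ := mem_map_side.mp h2
            exact absurd h (Ne.symm hst')
          obtain ⟨hw2, -⟩ := mem_map_side.mp h2
          have hwy : w = y := by
            by_contra hwy
            by_cases hwi : w = u i
            · subst hwi
              exact hDij (u i) (hud i) (deg2_of_mem_path q₂ hq₂ hw2 huij hwy)
            · have hdi : Deg2 (T i) w := deg2_of_mem_path q₁ hq₁ hw1 hwi hwy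
              by_cases hwj : w = u j
              · subst hwj
                exact hDij (u j) hdi (hud j)
              · exact hDij w hdi (deg2_of_mem_path q₂ hq₂ hw2 hwj hwy)
          subst hwy
          exact Or.inr rfl
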